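/- Let K be a number field, S a finite set of maximal ideals of its ring of integers, and a, b ∈ O_{K,S} nonzero. Suppose there exists N₀ such that for all integers n > N₀, every maximal ideal of O_{K,S} that contains a^n − 1 also contains b^n − 1. If a is a root of unity of order k, then b^k = 1, i.e., b is a root of unity whose order divides k. -/

import Mathlib

open IsDedekindDomain NumberField

lemma infinite_heightOneSpectrum_aux (K : Type*) [Field K] [NumberField K] :
    Infinite (HeightOneSpectrum (𝓞 K)) := by
  have hinj : Function.Injective (algebraMap ℤ (𝓞 K)) := by
    have : (algebraMap ℤ (𝓞 K)) = Int.castRingHom _ := by ext; simp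
    rw [this]; exact Int.cast_injective
  have hker : RingHom.ker (algebraMap ℤ (𝓞 K)) = ⊥ :=
    (RingHom.injective_iff_ker_eq_bot _).mp hinj
  have h : ∀ p : {p : ℕ // p.Prime}, ∃ v : HeightOneSpectrum (𝓞 K),
      v.asIdeal.comap (algebraMap ℤ (𝓞 K)) = Ideal.span {((p : ℕ) : ℤ)} := by
    rintro ⟨p, hp⟩
    have hpZ : Prime ((p : ℕ) : ℤ) := Int.prime_iff_natAbs_prime.mpr (by simpa)
    haveI hm : (Ideal.span {((p : ℕ) : ℤ)}).IsMaximal :=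
      PrincipalIdealRing.isMaximal_of_irreducible hpZ.irreducible
    obtain ⟨Q, hQmax, hQcomap⟩ :=
      Ideal.exists_ideal_over_maximal_of_isIntegral (S := 𝓞 K)
        (Ideal.span {((p : ℕ) : ℤ)}) (by rw [hker]; exact bot_le)
    have hQbot : Q ≠ ⊥ := by
      rintro rfl
      rw [Ideal.comap_bot_of_injective _ hinj] at hQcomap
      exact hpZ.ne_zero (by simpa using (Ideal.span_singleton_eq_bot.mp hQcomap.symm))
    exact ⟨⟨Q, hQmax.isPrime, hQbot⟩, hQcomap⟩
  choose f hf using h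
  haveI : Infinite {p : ℕ // p.Prime} := Nat.infinite_setOf_prime.to_subtype
  refine Infinite.of_injective f ?_
  rintro ⟨p, hp⟩ ⟨q, hq⟩ hpq
  have heq : Ideal.span {((p : ℕ) : ℤ)} = Ideal.span {((q : ℕ) : ℤ)} := by
    rw [← hf ⟨p, hp⟩, ← hf ⟨q, hq⟩, hpq]
  have h2 := Int.associated_iff_natAbs.mp (Ideal.span_singleton_eq_span_singleton.mp heq)
  simpa using h2

theorem support_problem_root_of_unity_case
    (K : Type*) [Field K] [NumberField K]
    (S : Finset (HeightOneSpectrum (𝓞 K)))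
    (a b : (S : Set (HeightOneSpectrum (𝓞 K))).integer K) (ha : a ≠ 0) (hb : b ≠ 0)
    (N₀ : ℕ)
    (hsupp : ∀ n : ℕ, N₀ < n →
      ∀ 𝔭 : Ideal ((S : Set (HeightOneSpectrum (𝓞 K))).integer K), 𝔭.IsMaximal →
        a ^ n - 1 ∈ 𝔭 → b ^ n - 1 ∈ 𝔭)
    (k : ℕ) (hk : 0 < k) (horder : orderOf a = k) :
    b ^ k = 1 := by
  classical
  have hak : a ^ k = 1 := by rw [← horder]; exact pow_orderOf_eq_one a
  have hstep : ∀ 𝔭 : Ideal ((S : Set (HeightOneSpectrum (𝓞 K))).integer K),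
      𝔭.IsMaximal → b ^ k - 1 ∈ 𝔭 := by
    intro 𝔭 h𝔭
    have h1 : ∀ m : ℕ, N₀ < k * m → (b ^ k) ^ m - 1 ∈ 𝔭 := by
      intro m hm
      have := hsupp (k * m) hm 𝔭 h𝔭 (by
        rw [pow_mul, hak, one_pow, sub_self]; exact 𝔭.zero_mem)
      rwa [pow_mul] at this
    have hm1 : N₀ < k * (N₀ + 1) := by
      have := Nat.le_mul_of_pos_left (N₀ + 1) hk; omega
    have hm2 : N₀ < k * (N₀ + 2) := by
      have := Nat.le_mul_of_pos_left (N₀ + 2) hk; omega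
    have hA := h1 (N₀ + 1) hm1
    have hB := h1 (N₀ + 2) hm2
    have hC : (b ^ k) ^ (N₀ + 1) * (b ^ k - 1) ∈ 𝔭 := by
      have hEq : (b ^ k) ^ (N₀ + 1) * (b ^ k - 1)
          = ((b ^ k) ^ (N₀ + 2) - 1) - ((b ^ k) ^ (N₀ + 1) - 1) := by ring
      rw [hEq]; exact 𝔭.sub_mem hB hA
    rcases h𝔭.isPrime.mem_or_mem hC with h | h
    · exfalso
      have hone : (1 : (S : Set (HeightOneSpectrum (𝓞 K))).integer K) ∈ 𝔭 := by
        have := 𝔭.sub_mem h hA; simpa using this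
      exact h𝔭.ne_top (Ideal.eq_top_of_isUnit_mem _ hone isUnit_one)
    · exact h
  have hjac : b ^ k - 1 ∈ Ideal.jacobson
      (⊥ : Ideal ((S : Set (HeightOneSpectrum (𝓞 K))).integer K)) := by
    rw [Ideal.jacobson]
    exact Submodule.mem_sInf.2 fun J hJ => hstep J hJ.2
  by_contra hne
  have hy0 : b ^ k - 1 ≠ 0 := sub_ne_zero.mpr hne
  have hyK : ((b ^ k - 1 : (S : Set (HeightOneSpectrum (𝓞 K))).integer K) : K) ≠ 0 :=
    fun h => hy0 (Subtype.ext h)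
  obtain ⟨r, s, hs, hrs⟩ := IsFractionRing.div_surjective (A := 𝓞 K)
    ((b ^ k - 1 : (S : Set (HeightOneSpectrum (𝓞 K))).integer K) : K)
  have hsK : algebraMap (𝓞 K) K s ≠ 0 :=
    IsFractionRing.to_map_ne_zero_of_mem_nonZeroDivisors hs
  have hr0 : r ≠ 0 := by
    rintro rfl
    rw [map_zero, zero_div] at hrs
    exact hyK hrs.symm
  have hs0 : s ≠ 0 := nonZeroDivisors.ne_zero hs
  haveI : Infinite (HeightOneSpectrum (𝓞 K)) := infinite_heightOneSpectrum_aux K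
  have hfin : ((S : Set (HeightOneSpectrum (𝓞 K))) ∪
      ({v | v.asIdeal ∣ Ideal.span {r}} ∪ {v | v.asIdeal ∣ Ideal.span {s}})).Finite :=
    S.finite_toSet.union ((Ideal.finite_factors (by
      simpa using hr0)).union (Ideal.finite_factors (by simpa using hs0)))
  obtain ⟨v, hv⟩ := hfin.infinite_compl.nonempty
  rw [Set.mem_compl_iff, Set.mem_union, Set.mem_union] at hv
  push_neg at hv
  obtain ⟨hvS, hvr, hvs⟩ := hv
  have hrmem : r ∉ v.asIdeal := fun h => hvr (Ideal.dvd_span_singleton.2 h)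
  have hsmem : s ∉ v.asIdeal := fun h => hvs (Ideal.dvd_span_singleton.2 h)
  haveI hvmax : v.asIdeal.IsMaximal := v.isPrime.isMaximal v.ne_bot
  obtain ⟨w, c, hc, hwc⟩ := hvmax.exists_inv hrmem
  -- z₀ * r + s ∈ v.asIdeal  with z₀ := -(s * w)
  have hnum : (-(s * w)) * r + s ∈ v.asIdeal := by
    have : (-(s * w)) * r + s = s * (1 - (w * r + c)) + s * c := by ring
    rw [hwc] at this
    have h2 : (-(s * w)) * r + s = s * c := by rw [this]; ring
    rw [h2]
    exact Ideal.mul_mem_left _ _ hc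
  set z : (S : Set (HeightOneSpectrum (𝓞 K))).integer K :=
    ⟨algebraMap (𝓞 K) K (-(s * w)), Subalgebra.algebraMap_mem _ _⟩ with hz
  have hunit : IsUnit ((b ^ k - 1) * z + 1) := Ideal.mem_jacobson_bot.1 hjac z
  have hbk : ((b ^ k - 1 : (S : Set (HeightOneSpectrum (𝓞 K))).integer K) : K)
      = algebraMap (𝓞 K) K r / algebraMap (𝓞 K) K s := hrs.symm
  have hcoe : (((b ^ k - 1) * z + 1 :
        (S : Set (HeightOneSpectrum (𝓞 K))).integer K) : K)
      = algebraMap (𝓞 K) K ((-(s * w)) * r + s) / algebraMap (𝓞 K) K s := by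
    have hzK : (z : K) = algebraMap (𝓞 K) K (-(s * w)) := rfl
    calc (((b ^ k - 1) * z + 1 : (S : Set (HeightOneSpectrum (𝓞 K))).integer K) : K)
        = ((b ^ k - 1 : (S : Set (HeightOneSpectrum (𝓞 K))).integer K) : K) * (z : K) + 1 := by
          push_cast; ring
      _ = (algebraMap (𝓞 K) K r / algebraMap (𝓞 K) K s)
            * algebraMap (𝓞 K) K (-(s * w)) + 1 := by rw [hbk, hzK]
      _ = algebraMap (𝓞 K) K ((-(s * w)) * r + s) / algebraMap (𝓞 K) K s := by
          rw [map_add, map_mul, map_neg, map_mul]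
          field_simp
  have hvu_lt : v.valuation K (((b ^ k - 1) * z + 1 :
      (S : Set (HeightOneSpectrum (𝓞 K))).integer K) : K) < 1 := by
    rw [hcoe, map_div₀]
    have h1 : v.valuation K (algebraMap (𝓞 K) K ((-(s * w)) * r + s)) < 1 :=
      (v.valuation_lt_one_iff_dvd _).2 (Ideal.dvd_span_singleton.2 hnum)
    have h2 : v.valuation K (algebraMap (𝓞 K) K s) = 1 := by
      refine le_antisymm (v.valuation_le_one s) ?_
      by_contra hlt
      exact hsmem (Ideal.dvd_span_singleton.1
        ((v.valuation_lt_one_iff_dvd _).1 (lt_of_not_ge hlt)))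
    rw [h2, div_one]
    exact h1
  obtain ⟨wu, hwu⟩ := hunit
  have hmul : ((wu : (S : Set (HeightOneSpectrum (𝓞 K))).integer K) : K)
      * (((wu⁻¹ : _ˣ) : (S : Set (HeightOneSpectrum (𝓞 K))).integer K) : K) = 1 := by
    have h3 : ((wu : (S : Set (HeightOneSpectrum (𝓞 K))).integer K)
        * ((wu⁻¹ : _ˣ) : (S : Set (HeightOneSpectrum (𝓞 K))).integer K)) = 1 := by
      rw [← Units.val_mul, mul_inv_cancel, Units.val_one]
    exact_mod_cast congrArg Subtype.val h3
  have h1 : v.valuation K ((wu : (S : Set (HeightOneSpectrum (𝓞 K))).integer K) : K) ≤ 1 :=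
    Set.integer_valuation_le_one _ _ _ hvS
  have h2 : v.valuation K (((wu⁻¹ : _ˣ) : (S : Set (HeightOneSpectrum (𝓞 K))).integer K) : K) ≤ 1 :=
    Set.integer_valuation_le_one _ _ _ hvS
  have hvw : v.valuation K ((wu : (S : Set (HeightOneSpectrum (𝓞 K))).integer K) : K) = 1 := by
    refine le_antisymm h1 ?_
    have h4 : v.valuation K ((wu : (S : Set (HeightOneSpectrum (𝓞 K))).integer K) : K)
        * v.valuation K (((wu⁻¹ : _ˣ) : (S : Set (HeightOneSpectrum (𝓞 K))).integer K) : K) = 1 := by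
      rw [← map_mul, hmul, map_one]
    calc (1 : WithZero (Multiplicative ℤ)) = _ := h4.symm
      _ ≤ v.valuation K ((wu : (S : Set (HeightOneSpectrum (𝓞 K))).integer K) : K) * 1 :=
        mul_le_mul_right h2 _
      _ = _ := mul_one _
  rw [hwu] at hvw
  rw [hvw] at hvu_lt
  exact lt_irrefl _ hvu_lt
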